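/- For every natural number k and every x ∈ ℝ, the Hermite polynomial identity holds: (−1)^k · e^{x²} · (d^k/dx^k e^{−x²}) = Σ_{j=0}^{⌊k/2⌋} (−1)^j · (k! / (j! · (k−2j)!)) · (2x)^{k−2j}, where d^k/dx^k denotes the k-th iterated derivative of the function x ↦ e^{−x²}. -/

import Mathlib

open Polynomial Finset
open scoped Nat

private lemma sum_reindex_aux (k : ℕ) (F : ℕ → ℝ)
    (hF : ∀ i, i ≤ k → ¬ Even (k + i) → F i = 0) :
    ∑ i ∈ Finset.range (k + 1), F i = ∑ j ∈ Finset.range (k / 2 + 1), F (k - 2 * j) := by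
  rw [← Finset.sum_filter_of_ne (p := fun i => Even (k + i))
      (by intro i hi hne
          by_contra h
          exact hne (hF i (Nat.lt_succ_iff.mp (Finset.mem_range.mp hi)) h))]
  apply Finset.sum_nbij' (i := fun i => (k - i) / 2) (j := fun j => k - 2 * j)
  · intro a ha
    simp only [Finset.mem_filter, Finset.mem_range] at ha
    obtain ⟨ha1, r, hr⟩ := ha
    simp only [Finset.mem_range]
    omega
  · intro j hj
    simp only [Finset.mem_range] at hj
    simp only [Finset.mem_filter, Finset.mem_range]
    constructor
    · omega
    · exact ⟨k - j, by omega⟩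
  · intro a ha
    simp only [Finset.mem_filter, Finset.mem_range] at ha
    obtain ⟨ha1, r, hr⟩ := ha
    omega
  · intro j hj
    simp only [Finset.mem_range] at hj
    omega
  · intro a ha
    simp only [Finset.mem_filter, Finset.mem_range] at ha
    obtain ⟨ha1, r, hr⟩ := ha
    congr 1
    omega

private lemma fact_two_mul (j : ℕ) :
    (2 * j).factorial = 2 ^ j * j.factorial * (2 * j - 1)‼ := by
  cases j with
  | zero => simp
  | succ m =>
    have h1 : 2 * (m + 1) = (2 * m + 1) + 1 := by ring
    rw [h1, Nat.factorial_eq_mul_doubleFactorial (2 * m + 1)]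
    have h2 : (2 * m + 1 + 1)‼ = (2 * (m + 1))‼ := by rw [h1]
    rw [h2, Nat.doubleFactorial_two_mul]
    have h3 : 2 * m + 1 + 1 - 1 = 2 * m + 1 := by omega
    rw [h3]

theorem statement_2 (k : ℕ) (x : ℝ) :
    (-1 : ℝ) ^ k * Real.exp (x ^ 2) *
        iteratedDeriv k (fun y => Real.exp (-y ^ 2)) x =
      ∑ j ∈ Finset.range (k / 2 + 1),
        (-1 : ℝ) ^ j * ((k.factorial : ℝ) / ((j.factorial : ℝ) * ((k - 2 * j).factorial : ℝ))) *
          (2 * x) ^ (k - 2 * j) := by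
  set s : ℝ := Real.sqrt 2 with hs_def
  have hs : s ^ 2 = 2 := Real.sq_sqrt (by norm_num)
  set g : ℝ → ℝ := fun y => Real.exp (-(y ^ 2 / 2)) with hg_def
  have hg : ContDiff ℝ (k : ℕ∞) g := by
    exact Real.contDiff_exp.comp (((contDiff_id.pow 2).div_const 2).neg)
  have hfun : (fun y : ℝ => Real.exp (-y ^ 2)) = fun y => g (s * y) := by
    funext y
    simp only [hg_def, mul_pow, hs]
    ring_nf
  have hconst := iteratedDeriv_comp_const_mul (n := k) (f := g) hg s
  rw [hfun, hconst]
  beta_reduce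
  rw [iteratedDeriv_eq_iterate, hg_def,
    Polynomial.deriv_gaussian_eq_hermite_mul_gaussian k (s * x)]
  have hexp : Real.exp (-((s * x) ^ 2 / 2)) = Real.exp (-x ^ 2) := by
    rw [mul_pow, hs]; ring_nf
  rw [hexp]
  have hcancel : (-1 : ℝ) ^ k * Real.exp (x ^ 2) *
      (s ^ k * ((-1 : ℝ) ^ k * (aeval (s * x) (hermite k)) * Real.exp (-x ^ 2)))
      = s ^ k * aeval (s * x) (hermite k) := by
    have hx : Real.exp (x ^ 2) * Real.exp (-x ^ 2) = 1 := by
      rw [← Real.exp_add]; norm_num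
    have h1 : (-1 : ℝ) ^ k * (-1 : ℝ) ^ k = 1 := by
      rw [← mul_pow]; norm_num
    calc (-1 : ℝ) ^ k * Real.exp (x ^ 2) *
        (s ^ k * ((-1 : ℝ) ^ k * (aeval (s * x) (hermite k)) * Real.exp (-x ^ 2)))
        = ((-1 : ℝ) ^ k * (-1 : ℝ) ^ k) * (Real.exp (x ^ 2) * Real.exp (-x ^ 2)) *
          (s ^ k * aeval (s * x) (hermite k)) := by ring
      _ = s ^ k * aeval (s * x) (hermite k) := by rw [hx, h1]; ring
  rw [hcancel, Polynomial.aeval_eq_sum_range, Polynomial.natDegree_hermite, Finset.mul_sum]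
  simp only [zsmul_eq_mul]
  rw [sum_reindex_aux k (fun i => s ^ k * (((hermite k).coeff i : ℝ) * (s * x) ^ i))
      (by intro i _ hne
          show s ^ k * (((hermite k).coeff i : ℝ) * (s * x) ^ i) = 0
          rw [Polynomial.coeff_hermite_of_odd_add (Nat.not_even_iff_odd.mp hne)]
          simp)]
  apply Finset.sum_congr rfl
  intro j hj
  have hk2 : 2 * j ≤ k := by
    have := Finset.mem_range.mp hj; omega
  have hcoeff := Polynomial.coeff_hermite_of_even_add (n := k) (k := k - 2 * j)
    ⟨k - j, by omega⟩
  have e1 : k - (k - 2 * j) = 2 * j := by omega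
  have e2 : 2 * j / 2 = j := by omega
  rw [e1, e2] at hcoeff
  have hcs : k.choose (k - 2 * j) = k.choose (2 * j) := Nat.choose_symm hk2
  have hkf : k.factorial =
      k.choose (2 * j) * (2 ^ j * j.factorial * (2 * j - 1)‼) * (k - 2 * j).factorial := by
    rw [← Nat.choose_mul_factorial_mul_factorial hk2, fact_two_mul]
  have hsk : s ^ k * (s * x) ^ (k - 2 * j) = 2 ^ (k - j) * x ^ (k - 2 * j) := by
    rw [mul_pow, ← mul_assoc, ← pow_add,
      show k + (k - 2 * j) = 2 * (k - j) from by omega, pow_mul, hs]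
  calc s ^ k * (((hermite k).coeff (k - 2 * j) : ℝ) * (s * x) ^ (k - 2 * j))
      = (s ^ k * (s * x) ^ (k - 2 * j)) *
        ((-1 : ℝ) ^ j * ((2 * j - 1)‼ : ℝ) * (k.choose (2 * j) : ℝ)) := by
        rw [hcoeff, hcs]; push_cast; ring
    _ = 2 ^ (k - j) * x ^ (k - 2 * j) *
        ((-1 : ℝ) ^ j * ((2 * j - 1)‼ : ℝ) * (k.choose (2 * j) : ℝ)) := by rw [hsk]
    _ = (-1 : ℝ) ^ j * ((k.factorial : ℝ) / ((j.factorial : ℝ) * ((k - 2 * j).factorial : ℝ))) *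
          (2 * x) ^ (k - 2 * j) := by
        rw [hkf, show (2 : ℝ) ^ (k - j) = 2 ^ (k - 2 * j) * 2 ^ j from by
          rw [← pow_add]; congr 1; omega]
        push_cast
        field_simp
        ring
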